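/- Under the Kirchhoff gluing equations (i)–(iv), the value d₀ is completely determined by the remaining incoming values via the formula d₀ = (nL/(m + n − 2))·(c₁ + ⋯ + c_{m−1}) + ((2 − m)/(m + n − 2))·(d₁ + ⋯ + d_{n−1}). -/

import Mathlib

open Finset

/-- Under the Kirchhoff gluing equations (i)–(iv) arising from collapsing an edge with edge
endomorphism `L` joining a vertex of degree `m` to a vertex of degree `n`, the value `d₀` is
completely determined by the remaining incoming values:
`d₀ = (nL/(m+n−2))·(c₁ + ⋯ + c_{m−1}) + ((2−m)/(m+n−2))·(d₁ + ⋯ + d_{n−1})`. -/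
theorem kirchhoff_collapse_d0 {F : Type*} [Field F] (m n : ℕ) (hm : 1 ≤ m) (hn : 1 ≤ n)
    (hmF : (m : F) ≠ 0) (hnF : (n : F) ≠ 0) (hmnF : (m : F) + (n : F) - 2 ≠ 0)
    (L : F) (hL : L ≠ 0) (c : Fin m → F) (d : Fin n → F) (a b : F)
    (h1 : c ⟨0, hm⟩ = L⁻¹ * a)
    (h2 : b = (2 / (m : F)) * (∑ i, c i) - c ⟨0, hm⟩)
    (h3 : a = (2 / (n : F)) * (∑ i, d i) - d ⟨0, hn⟩)
    (h4 : d ⟨0, hn⟩ = L * b) :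
    d ⟨0, hn⟩ =
      ((n : F) * L / ((m : F) + (n : F) - 2)) * (∑ i ∈ univ.erase ⟨0, hm⟩, c i) +
        ((2 - (m : F)) / ((m : F) + (n : F) - 2)) * (∑ i ∈ univ.erase ⟨0, hn⟩, d i) := by
  have hc : (∑ i, c i) = c ⟨0, hm⟩ + ∑ i ∈ univ.erase ⟨0, hm⟩, c i :=
    (Finset.add_sum_erase _ c (mem_univ _)).symm
  have hd : (∑ i, d i) = d ⟨0, hn⟩ + ∑ i ∈ univ.erase ⟨0, hn⟩, d i :=
    (Finset.add_sum_erase _ d (mem_univ _)).symm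
  rw [hc] at h2
  rw [hd] at h3
  set c0 := c ⟨0, hm⟩
  set d0 := d ⟨0, hn⟩
  set Sc := ∑ i ∈ univ.erase ⟨0, hm⟩, c i
  set Sd := ∑ i ∈ univ.erase ⟨0, hn⟩, d i
  field_simp at h1 h2 h3 ⊢
  -- h1 : c0 * L = a, h2 : b * m = 2*(c0+Sc) - c0*m (some form), etc.
  have h2F : (2:F) ≠ 0 := by
    intro h2z
    have hmod : ∀ k : ℕ, (k : F) = ((k % 2 : ℕ) : F) := by
      intro k
      conv_lhs => rw [← Nat.div_add_mod k 2]
      push_cast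
      rw [h2z]
      ring
    have hm1 : (m : F) = 1 := by
      rcases Nat.mod_two_eq_zero_or_one m with h | h
      · exact absurd (by rw [hmod m, h]; norm_num) hmF
      · rw [hmod m, h]; norm_num
    have hn1 : (n : F) = 1 := by
      rcases Nat.mod_two_eq_zero_or_one n with h | h
      · exact absurd (by rw [hmod n, h]; norm_num) hnF
      · rw [hmod n, h]; norm_num
    exact hmnF (by rw [hm1, hn1]; ring)
  have key : 2 * (d0 * ((m:F) + (n:F) - 2)) = 2 * ((n:F) * L * Sc + (2 - (m:F)) * Sd) := by
    linear_combination (n:F)*(m:F)*h4 + (n:F)*L*h2 + (2-(m:F))*h3 + (2-(m:F))*(n:F)*h1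
  exact mul_left_cancel₀ h2F (by rw [key]; ring)
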